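/- Define f_H(x₁,x₂) = ((e^{x₁} − 1)/x₁) · ((e^{x₁+x₂} − e^{x₁})/x₂) · ((e^{x₁+x₂} − 1)/(x₁+x₂)). Then for all x₁, x₂ ∈ ℝ with x₁ ≠ 0, x₂ ≠ 0 and x₁+x₂ ≠ 0: e^{3x₁} · f_H(x₂, −x₁−x₂) = f_H(x₁,x₂); that is, f_H is invariant under the square of the cyclic operator τ₃, where (τ_j² F)(x₁,x₂) = e^{jx₁} F(x₂, −x₁−x₂). -/

import Mathlib

/-- The function `f_H(x₁,x₂) = exp[0,x₁]·exp[x₁,x₁+x₂]·exp[0,x₁+x₂]`. -/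
noncomputable def fH (x₁ x₂ : ℝ) : ℝ :=
  ((Real.exp x₁ - 1) / x₁) * ((Real.exp (x₁ + x₂) - Real.exp x₁) / x₂) *
    ((Real.exp (x₁ + x₂) - 1) / (x₁ + x₂))

/-- `f_H` is invariant under the square of the cyclic operator `τ₃`:
`(τ₃² F)(x₁,x₂) = e^{3x₁} F(x₂, −x₁−x₂)`. -/
theorem stmt9 (x₁ x₂ : ℝ) (h1 : x₁ ≠ 0) (h2 : x₂ ≠ 0) (h12 : x₁ + x₂ ≠ 0) :
    Real.exp (3 * x₁) * fH x₂ (-x₁ - x₂) = fH x₁ x₂ := by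
  unfold fH
  have hx : x₂ + (-x₁ - x₂) = -x₁ := by ring
  have hne : Real.exp x₁ ≠ 0 := (Real.exp_pos x₁).ne'
  rw [hx, show (3:ℝ) * x₁ = x₁ + x₁ + x₁ by ring, Real.exp_add, Real.exp_add,
    Real.exp_neg, Real.exp_add]
  have hd : Real.exp x₁ ^ 2 * x₁ * x₂ ^ 2 + Real.exp x₁ ^ 2 * x₁ ^ 2 * x₂ ≠ 0 := by
    have h : Real.exp x₁ ^ 2 * x₁ * x₂ ^ 2 + Real.exp x₁ ^ 2 * x₁ ^ 2 * x₂
        = Real.exp x₁ ^ 2 * x₁ * x₂ * (x₁ + x₂) := by ring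
    rw [h]
    exact mul_ne_zero (mul_ne_zero (mul_ne_zero (pow_ne_zero 2 hne) h1) h2) h12
  field_simp
  rw [show -x₁ - x₂ = -(x₁ + x₂) by ring, div_neg, neg_neg, mul_div_assoc, div_self h12, mul_one]
  ring
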